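/- Any linear discrete second derivative operator of order of accuracy p > 2 fails to be entropy dissipative for all convex entropies: there exists a convex entropy U and a grid function u with Σ_i U'(u_i)(D₂u)_i > 0. -/

import Mathlib

open Finset

noncomputable def Uent : ℝ → ℝ := fun t => (max t 0) ^ 2

lemma Uent_hasDeriv (t : ℝ) : HasDerivAt Uent (2 * max t 0) t := by
  rcases lt_trichotomy t 0 with ht | rfl | ht
  · have : HasDerivAt (fun _ : ℝ => (0:ℝ)) 0 t := hasDerivAt_const t 0
    have heq : Uent =ᶠ[nhds t] fun _ => (0:ℝ) := by
      filter_upwards [Iio_mem_nhds ht] with x hx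
      simp [Uent, max_eq_right (le_of_lt (Set.mem_Iio.mp hx))]
    have := this.congr_of_eventuallyEq heq
    simpa [max_eq_right ht.le] using this
  · rw [hasDerivAt_iff_isLittleO]
    simp only [max_self, mul_zero, sub_zero, smul_zero]
    rw [Asymptotics.isLittleO_iff]
    intro ε hε
    filter_upwards [Metric.ball_mem_nhds (0:ℝ) hε] with x hx
    simp only [Metric.mem_ball, Real.dist_eq, sub_zero] at hx
    have h1 : |max x 0| ≤ |x| := by
      rcases le_or_gt x 0 with hx0 | hx0
      · simp [max_eq_right hx0]
      · simp [max_eq_left hx0.le]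
    calc ‖Uent x - Uent 0‖ = |max x 0| ^ 2 := by
          simp [Uent, abs_pow, sq_abs]
      _ ≤ |x| * |x| := by rw [sq]; exact mul_le_mul h1 h1 (abs_nonneg _) (abs_nonneg _)
      _ ≤ ε * ‖x‖ := by
          apply mul_le_mul_of_nonneg_right hx.le (abs_nonneg _)
  · have : HasDerivAt (fun x : ℝ => x ^ 2) (2 * t) t := by
      simpa using hasDerivAt_pow 2 t
    have heq : Uent =ᶠ[nhds t] fun x => x ^ 2 := by
      filter_upwards [Ioi_mem_nhds ht] with x hx
      simp [Uent, max_eq_left (le_of_lt (Set.mem_Ioi.mp hx))]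
    have := this.congr_of_eventuallyEq heq
    simpa [max_eq_left ht.le] using this

lemma Uent_deriv (t : ℝ) : deriv Uent t = 2 * max t 0 := (Uent_hasDeriv t).deriv

lemma Uent_convex : ConvexOn ℝ Set.univ Uent := by
  have hmax : ConvexOn ℝ Set.univ (fun t : ℝ => max t 0) := by
    have := (convexOn_id (convex_univ (𝕜 := ℝ) (E := ℝ))).sup (convexOn_const 0 convex_univ)
    simpa [Pi.sup_def] using this
  have := hmax.pow (n := 2) (fun x _ => le_max_right x 0)
  have hU : Uent = (fun t : ℝ => max t 0) ^ 2 := by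
    funext t
    simp [Uent]
  rw [hU]
  exact this

lemma exists_neg_coeff (h : ℝ) (hh : 0 < h) (c : ℤ →₀ ℝ)
    (h2 : ∑ l ∈ c.support, c l * ((l : ℝ) * h) ^ 2 = 2)
    (h4 : ∑ l ∈ c.support, c l * ((l : ℝ) * h) ^ 4 = 0) :
    ∃ k : ℤ, k ≠ 0 ∧ c k < 0 := by
  by_contra hcon
  push_neg at hcon
  have hS2 : ∑ l ∈ c.support, c l * (l : ℝ) ^ 2 = 2 / h ^ 2 := by
    have : (∑ l ∈ c.support, c l * (l : ℝ) ^ 2) * h ^ 2 = 2 := by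
      rw [Finset.sum_mul]; rw [← h2]; apply Finset.sum_congr rfl; intro l _; ring
    field_simp at this ⊢
    linarith
  have hS4 : ∑ l ∈ c.support, c l * (l : ℝ) ^ 4 = 0 := by
    have : (∑ l ∈ c.support, c l * (l : ℝ) ^ 4) * h ^ 4 = 0 := by
      rw [Finset.sum_mul]; rw [← h4]; apply Finset.sum_congr rfl; intro l _; ring
    have hne : h ^ 4 ≠ 0 := by positivity
    exact (mul_eq_zero.mp this).resolve_right hne
  have hle : ∑ l ∈ c.support, c l * (l : ℝ) ^ 2 ≤ ∑ l ∈ c.support, c l * (l : ℝ) ^ 4 := by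
    apply Finset.sum_le_sum
    intro l _
    rcases eq_or_ne l 0 with rfl | hl0
    · simp
    · have hcl : 0 ≤ c l := hcon l hl0
      have h1 : (1 : ℝ) ≤ (l : ℝ) ^ 2 := by
        have hab : (1 : ℤ) ≤ |l| := Int.one_le_abs hl0
        have : (1 : ℤ) ≤ l ^ 2 := by nlinarith [sq_abs l]
        exact_mod_cast this
      have : (l : ℝ) ^ 2 ≤ (l : ℝ) ^ 4 := by nlinarith
      exact mul_le_mul_of_nonneg_left this hcl
  rw [hS2, hS4] at hle
  have : 0 < 2 / h ^ 2 := by positivity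
  linarith

/-- Any linear discrete second derivative operator of order of accuracy `p > 2`
(a stencil `(D₂ u)_j = ∑_l c_l u_{j+l}` on the uniform grid `x_j = j h`, encoded by
the moment/order conditions up to degree 4) fails to be entropy dissipative for all
convex entropies: there exist a convex differentiable entropy `U` and a grid
function `u` with `∑_i U'(u_i)(D₂ u)_i > 0`. -/
theorem high_order_laplacian_not_entropy_dissipative
    (h : ℝ) (hh : 0 < h) (c : ℤ →₀ ℝ)
    (h0 : ∑ l ∈ c.support, c l = 0)
    (h1 : ∑ l ∈ c.support, c l * ((l : ℝ) * h) = 0)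
    (h2 : ∑ l ∈ c.support, c l * ((l : ℝ) * h) ^ 2 = 2)
    (h3 : ∑ l ∈ c.support, c l * ((l : ℝ) * h) ^ 3 = 0)
    (h4 : ∑ l ∈ c.support, c l * ((l : ℝ) * h) ^ 4 = 0) :
    ∃ U : ℝ → ℝ, ConvexOn ℝ Set.univ U ∧ Differentiable ℝ U ∧
      ∃ u : ℤ → ℝ,
        0 < ∑' i : ℤ, deriv U (u i) * ∑ l ∈ c.support, c l * u (i + l) := by
  obtain ⟨k, hk0, hck⟩ := exists_neg_coeff h hh c h2 h4
  refine ⟨Uent, Uent_convex, fun t => (Uent_hasDeriv t).differentiableAt, ?_⟩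
  set A : ℝ := (|c 0| + 1) / (-c k) with hA
  have hAk : 0 < -c k := by linarith
  have hApos : 0 < A := div_pos (by have := abs_nonneg (c 0); linarith) hAk
  set u : ℤ → ℝ := fun i => if i = -k then 1 else if i = 0 then -A else 0 with hu
  refine ⟨u, ?_⟩
  have hder : ∀ t, deriv Uent t = 2 * max t 0 := Uent_deriv
  -- all terms except i = -k vanish
  have hzero : ∀ i : ℤ, i ≠ -k →
      deriv Uent (u i) * ∑ l ∈ c.support, c l * u (i + l) = 0 := by
    intro i hi
    have hui : u i ≤ 0 := by
      simp only [hu]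
      rw [if_neg hi]
      split
      · linarith
      · exact le_refl (0:ℝ)
    rw [hder, show u i ⊔ 0 = 0 from max_eq_right hui]
    ring
  have hmain : ∑ l ∈ c.support, c l * u (-k + l) = c 0 - A * c k := by
    have hstep : ∀ l ∈ c.support, c l * u (-k + l) =
        (if l = 0 then c l else 0) + (if l = k then c l * (-A) else 0) := by
      intro l _
      rcases eq_or_ne l 0 with rfl | hl0
      · have h00 : ¬(0:ℤ) = k := fun hcc => hk0 hcc.symm
        simp [hu, h00]
      · rcases eq_or_ne l k with rfl | hlk
        · have h1 : -l + l = 0 := by ring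
          have h2 : (-l + l : ℤ) ≠ -l := by omega
          simp [hu, h1, h2, hl0, hk0]
        · have h1 : (-k + l : ℤ) ≠ -k := by
            intro hcc; apply hl0; omega
          have h2 : (-k + l : ℤ) ≠ 0 := by
            intro hcc; apply hlk; omega
          simp [hu, h1, h2, hl0, hlk]
    rw [Finset.sum_congr rfl hstep, Finset.sum_add_distrib,
      Finset.sum_ite_eq' c.support (0 : ℤ) (fun l => c l),
      Finset.sum_ite_eq' c.support k (fun l => c l * (-A))]
    have hkmem : k ∈ c.support := Finsupp.mem_support_iff.mpr (ne_of_lt hck)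
    rw [if_pos hkmem]
    rcases eq_or_ne (c 0) 0 with hc0 | hc0
    · split <;> simp [hc0] <;> ring
    · rw [if_pos (Finsupp.mem_support_iff.mpr hc0)]; ring
  have hval : deriv Uent (u (-k)) * ∑ l ∈ c.support, c l * u (-k + l)
      = 2 * (c 0 - A * c k) := by
    rw [hmain, hder]
    have : u (-k) = 1 := by simp [hu]
    rw [this]
    norm_num
  rw [tsum_eq_single (-k) hzero, hval]
  have hprod : A * -c k = |c 0| + 1 := div_mul_cancel₀ _ (ne_of_gt hAk)
  have hc0 : -|c 0| ≤ c 0 := neg_abs_le _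
  nlinarith [hprod, hc0]
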